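/- Under the two-state stationary Markov chain assumptions, for every integer t ≥ 1: E(X_t X_{t−1}) = α₀(α₀+α₁)/((1+α₀)(1+α₀+α₁)) and Var(X_t X_{t−1}) = α₀(α₀+α₁)(2α₀+α₁+1)/((1+α₀)²(1+α₀+α₁)²); moreover, for all integers t, s ≥ 1 with t ≠ s, Cov(X_t X_{t−1}, X_s X_{s−1}) = (α₁/(1+α₀+α₁))^{|t−s|−1} · α₀(α₀+α₁)²/((1+α₀)²(1+α₀+α₁)²). -/

import Mathlib

open MeasureTheory ProbabilityTheory Real

/-- A two-state stationary Markov chain with parameters `α₀, α₁`. -/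
structure TwoStateChain (Ω : Type) [MeasurableSpace Ω] (μ : Measure Ω)
    (α₀ α₁ : ℝ) (X : ℕ → Ω → ℝ) : Prop where
  isProb : IsProbabilityMeasure μ
  pos₀ : 0 < α₀
  pos₁ : 0 < α₁
  meas : ∀ t, Measurable (X t)
  binary : ∀ t ω, X t ω = 0 ∨ X t ω = 1
  init : (μ {ω | X 0 ω = 1}).toReal = α₀ / (1 + α₀)
  markov_zero : ∀ t : ℕ, 1 ≤ t → ∀ x : ℕ → ℝ,
    (∀ s, s < t → x s = 0 ∨ x s = 1) → x (t - 1) = 0 →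
    0 < μ {ω | ∀ s, s < t → X s ω = x s} →
    (μ ({ω | X t ω = 1} ∩ {ω | ∀ s, s < t → X s ω = x s})).toReal =
      (α₀ / (1 + α₀ + α₁)) * (μ {ω | ∀ s, s < t → X s ω = x s}).toReal
  markov_one : ∀ t : ℕ, 1 ≤ t → ∀ x : ℕ → ℝ,
    (∀ s, s < t → x s = 0 ∨ x s = 1) → x (t - 1) = 1 →
    0 < μ {ω | ∀ s, s < t → X s ω = x s} →
    (μ ({ω | X t ω = 1} ∩ {ω | ∀ s, s < t → X s ω = x s})).toReal =
      ((α₀ + α₁) / (1 + α₀ + α₁)) * (μ {ω | ∀ s, s < t → X s ω = x s}).toReal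

/-- Covariance `Cov(f,g) = E(fg) − E(f)E(g)`. -/
noncomputable def covQ {Ω : Type} [MeasurableSpace Ω] (μ : Measure Ω) (f g : Ω → ℝ) : ℝ :=
  (∫ ω, f ω * g ω ∂μ) - (∫ ω, f ω ∂μ) * ∫ ω, g ω ∂μ

/-- transition probability to state 1 from state `r` -/
noncomputable def qv (α₀ α₁ r : ℝ) : ℝ :=
  if r = 1 then (α₀ + α₁) / (1 + α₀ + α₁) else α₀ / (1 + α₀ + α₁)

namespace TwoStateChain

variable {Ω : Type} [MeasurableSpace Ω] {μ : Measure Ω} {α₀ α₁ : ℝ} {X : ℕ → Ω → ℝ}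
variable (h : TwoStateChain Ω μ α₀ α₁ X)
include h

lemma measSet (t : ℕ) (r : ℝ) : MeasurableSet {ω | X t ω = r} :=
  h.meas t (measurableSet_singleton r)

lemma finmeas (A : Set Ω) : μ A ≠ ⊤ := by
  have := h.isProb; exact measure_ne_top μ A

lemma P_union {A B : Set Ω} (hB : MeasurableSet B) (hd : Disjoint A B) :
    (μ (A ∪ B)).toReal = (μ A).toReal + (μ B).toReal := by
  rw [measure_union hd hB, ENNReal.toReal_add (h.finmeas A) (h.finmeas B)]

lemma measCyl (t : ℕ) (G : Finset ℕ) (b : ℕ → ℝ) :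
    MeasurableSet {ω | ∀ v, v < t → v ∉ G → X v ω = b v} := by
  have he : {ω | ∀ v, v < t → v ∉ G → X v ω = b v}
      = ⋂ (v : ℕ), {ω | v < t → v ∉ G → X v ω = b v} := by
    ext ω; simp [Set.mem_iInter]
  rw [he]
  refine MeasurableSet.iInter fun v => ?_
  by_cases h1 : v < t ∧ v ∉ G
  · have : {ω | v < t → v ∉ G → X v ω = b v} = {ω | X v ω = b v} := by
      ext ω; simp [h1.1, h1.2]
    rw [this]; exact h.measSet v (b v)
  · have : {ω | v < t → v ∉ G → X v ω = b v} = Set.univ := by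
      ext ω; simp only [Set.mem_setOf_eq, Set.mem_univ, iff_true]
      intro hv hG'; exact absurd ⟨hv, hG'⟩ h1
    rw [this]; exact MeasurableSet.univ

lemma markov_cyl (t : ℕ) (ht : 1 ≤ t) (x : ℕ → ℝ) (hx : ∀ s, s < t → x s = 0 ∨ x s = 1) :
    (μ ({ω | X t ω = 1} ∩ {ω | ∀ s, s < t → X s ω = x s})).toReal =
      qv α₀ α₁ (x (t - 1)) * (μ {ω | ∀ s, s < t → X s ω = x s}).toReal := by
  by_cases hpos : 0 < μ {ω | ∀ s, s < t → X s ω = x s}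
  · rcases hx (t - 1) (by omega) with h0 | h1
    · rw [qv, h0, if_neg (by norm_num)]
      exact h.markov_zero t ht x hx h0 hpos
    · rw [qv, h1, if_pos rfl]
      exact h.markov_one t ht x hx h1 hpos
  · have hz : μ {ω | ∀ s, s < t → X s ω = x s} = 0 := by
      rwa [pos_iff_ne_zero, not_ne_iff] at hpos
    have hz2 : μ ({ω | X t ω = 1} ∩ {ω | ∀ s, s < t → X s ω = x s}) = 0 :=
      measure_mono_null Set.inter_subset_right hz
    simp [hz, hz2]

lemma markov_gen (t : ℕ) (ht : 1 ≤ t) (G : Finset ℕ) (hG : (t - 1) ∉ G)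
    (b : ℕ → ℝ) (hb : ∀ v, b v = 0 ∨ b v = 1) :
    (μ ({ω | X t ω = 1} ∩ {ω | ∀ v, v < t → v ∉ G → X v ω = b v})).toReal =
      qv α₀ α₁ (b (t - 1)) * (μ {ω | ∀ v, v < t → v ∉ G → X v ω = b v}).toReal := by
  induction G using Finset.induction_on generalizing b with
  | empty =>
      have he : {ω | ∀ v, v < t → v ∉ (∅ : Finset ℕ) → X v ω = b v}
          = {ω | ∀ v, v < t → X v ω = b v} := by
        ext ω; simp
      rw [he]
      exact h.markov_cyl t ht b (fun s _ => hb s)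
  | @insert a G ha ih =>
      have hat : a ≠ t - 1 := fun e => hG (by simp [e])
      have hGt : t - 1 ∉ G := fun e => hG (Finset.mem_insert_of_mem e)
      by_cases halt : a < t
      · have hsplit : ∀ c : ℝ,
            {ω | ∀ v, v < t → v ∉ G → X v ω = Function.update b a c v} =
            {ω | ∀ v, v < t → v ∉ insert a G → X v ω = b v} ∩ {ω | X a ω = c} := by
          intro c; ext ω
          simp only [Set.mem_inter_iff, Set.mem_setOf_eq]
          constructor
          · intro hω
            refine ⟨fun v hv hvin => ?_, ?_⟩
            · have hva : v ≠ a := fun e => hvin (by simp [e])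
              have := hω v hv (fun hvG => hvin (Finset.mem_insert_of_mem hvG))
              rwa [Function.update_of_ne hva] at this
            · have := hω a halt ha; simpa using this
          · rintro ⟨h1, h2⟩ v hv hvG
            rcases eq_or_ne v a with rfl | hv'
            · simpa using h2
            · rw [Function.update_of_ne hv']
              exact h1 v hv (by simp [Finset.mem_insert, hv', hvG])
        have hbupd : ∀ c : ℝ, c = 0 ∨ c = 1 → ∀ v, Function.update b a c v = 0 ∨
            Function.update b a c v = 1 := by
          intro c hc v
          rcases eq_or_ne v a with rfl | hv
          · simpa using hc
          · rw [Function.update_of_ne hv]; exact hb v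
        have hq : ∀ c : ℝ, Function.update b a c (t - 1) = b (t - 1) :=
          fun c => Function.update_of_ne (Ne.symm hat) c b
        have e0 := ih hGt (Function.update b a 0) (hbupd 0 (Or.inl rfl))
        have e1 := ih hGt (Function.update b a 1) (hbupd 1 (Or.inr rfl))
        rw [hsplit 0, hq] at e0
        rw [hsplit 1, hq] at e1
        set S := {ω | ∀ v, v < t → v ∉ insert a G → X v ω = b v} with hS
        have hSm : MeasurableSet S := h.measCyl t (insert a G) b
        have hdisj : Disjoint (S ∩ {ω | X a ω = 0}) (S ∩ {ω | X a ω = 1}) := by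
          rw [Set.disjoint_iff]
          rintro ω ⟨⟨-, h0⟩, ⟨-, h1⟩⟩
          simp only [Set.mem_setOf_eq] at h0 h1
          norm_num [h0] at h1
        have hScover : S = (S ∩ {ω | X a ω = 0}) ∪ (S ∩ {ω | X a ω = 1}) := by
          ext ω
          simp only [Set.mem_union, Set.mem_inter_iff, Set.mem_setOf_eq]
          constructor
          · intro hω; rcases h.binary a ω with h0 | h0
            · exact Or.inl ⟨hω, h0⟩
            · exact Or.inr ⟨hω, h0⟩
          · rintro (⟨hω, -⟩ | ⟨hω, -⟩) <;> exact hω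
        have hTcover : {ω | X t ω = 1} ∩ S =
            ({ω | X t ω = 1} ∩ (S ∩ {ω | X a ω = 0})) ∪
            ({ω | X t ω = 1} ∩ (S ∩ {ω | X a ω = 1})) := by
          rw [← Set.inter_union_distrib_left, ← hScover]
        have m0 : MeasurableSet (S ∩ {ω | X a ω = 0}) := hSm.inter (h.measSet a 0)
        have m1 : MeasurableSet (S ∩ {ω | X a ω = 1}) := hSm.inter (h.measSet a 1)
        have key1 : (μ ({ω | X t ω = 1} ∩ S)).toReal =
            (μ ({ω | X t ω = 1} ∩ (S ∩ {ω | X a ω = 0}))).toReal +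
            (μ ({ω | X t ω = 1} ∩ (S ∩ {ω | X a ω = 1}))).toReal := by
          rw [hTcover]
          exact h.P_union ((h.measSet t 1).inter m1)
            (hdisj.mono Set.inter_subset_right Set.inter_subset_right)
        have key2 : (μ S).toReal =
            (μ (S ∩ {ω | X a ω = 0})).toReal + (μ (S ∩ {ω | X a ω = 1})).toReal := by
          conv_lhs => rw [hScover]
          exact h.P_union m1 hdisj
        rw [key1, key2, e0, e1]; ring
      · have he : {ω | ∀ v, v < t → v ∉ insert a G → X v ω = b v}
            = {ω | ∀ v, v < t → v ∉ G → X v ω = b v} := by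
          ext ω
          simp only [Set.mem_setOf_eq]
          constructor
          · intro hω v hv hvG
            exact hω v hv (by
              simp only [Finset.mem_insert, not_or]
              exact ⟨fun e => halt (e ▸ hv), hvG⟩)
          · intro hω v hv hvG
            exact hω v hv (fun e => hvG (Finset.mem_insert_of_mem e))
        rw [he]
        exact ih hGt b hb

end TwoStateChain

namespace TwoStateChain
variable {Ω : Type} [MeasurableSpace Ω] {μ : Measure Ω} {α₀ α₁ : ℝ} {X : ℕ → Ω → ℝ}
variable (h : TwoStateChain Ω μ α₀ α₁ X)
include h

lemma P_one (t : ℕ) : (μ {ω | X t ω = 1}).toReal = α₀ / (1 + α₀) := by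
  induction t with
  | zero => exact h.init
  | succ n ihn =>
    have hgen : ∀ c : ℝ, c = 0 ∨ c = 1 →
        (μ ({ω | X (n+1) ω = 1} ∩ {ω | X n ω = c})).toReal =
          qv α₀ α₁ c * (μ {ω | X n ω = c}).toReal := by
      intro c hc
      have key := h.markov_gen (n+1) (by omega) (Finset.range n) (by simp) (fun _ => c)
        (fun _ => hc)
      have hset : {ω | ∀ v, v < n+1 → v ∉ Finset.range n → X v ω = (fun _ => c) v}
          = {ω | X n ω = c} := by
        ext ω
        simp only [Set.mem_setOf_eq, Finset.mem_range, not_lt]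
        constructor
        · intro hω; exact hω n (by omega) (by omega)
        · intro hω v hv1 hv2
          have : v = n := by omega
          subst this; exact hω
      rw [hset] at key
      simpa using key
    have q0 : qv α₀ α₁ 0 = α₀ / (1 + α₀ + α₁) := if_neg (by norm_num)
    have q1 : qv α₀ α₁ 1 = (α₀ + α₁) / (1 + α₀ + α₁) := if_pos rfl
    have hdisj : Disjoint ({ω | X (n+1) ω = 1} ∩ {ω | X n ω = 0})
        ({ω | X (n+1) ω = 1} ∩ {ω | X n ω = 1}) := by
      rw [Set.disjoint_iff]
      rintro ω ⟨⟨-, h0⟩, ⟨-, h1⟩⟩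
      simp only [Set.mem_setOf_eq] at h0 h1
      norm_num [h0] at h1
    have hcov : {ω | X (n+1) ω = 1} =
        ({ω | X (n+1) ω = 1} ∩ {ω | X n ω = 0}) ∪
        ({ω | X (n+1) ω = 1} ∩ {ω | X n ω = 1}) := by
      ext ω
      simp only [Set.mem_union, Set.mem_inter_iff, Set.mem_setOf_eq]
      constructor
      · intro hω
        rcases h.binary n ω with h0 | h0
        · exact Or.inl ⟨hω, h0⟩
        · exact Or.inr ⟨hω, h0⟩
      · rintro (⟨hω, -⟩ | ⟨hω, -⟩) <;> exact hω
    have hdisj2 : Disjoint {ω | X n ω = 0} {ω | X n ω = 1} := by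
      rw [Set.disjoint_iff]
      rintro ω ⟨h0, h1⟩
      simp only [Set.mem_setOf_eq] at h0 h1
      norm_num [h0] at h1
    have hsum : (μ {ω | X n ω = 0}).toReal + (μ {ω | X n ω = 1}).toReal = 1 := by
      have hu : {ω | X n ω = 0} ∪ {ω | X n ω = 1} = Set.univ := by
        ext ω
        simp only [Set.mem_union, Set.mem_setOf_eq, Set.mem_univ, iff_true]
        exact h.binary n ω
      have := h.P_union (A := {ω | X n ω = 0}) (h.measSet n 1) hdisj2
      rw [hu] at this
      have hpu : (μ (Set.univ : Set Ω)).toReal = 1 := by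
        have := h.isProb
        simp
      rw [hpu] at this
      linarith
    have h0v : (μ {ω | X n ω = 0}).toReal = 1 - α₀ / (1 + α₀) := by
      rw [ihn] at hsum; linarith
    calc (μ {ω | X (n+1) ω = 1}).toReal
        = (μ ({ω | X (n+1) ω = 1} ∩ {ω | X n ω = 0})).toReal +
          (μ ({ω | X (n+1) ω = 1} ∩ {ω | X n ω = 1})).toReal := by
          rw [← h.P_union ((h.measSet (n+1) 1).inter (h.measSet n 1))
            (hdisj.mono le_rfl le_rfl), ← hcov]
      _ = α₀ / (1 + α₀ + α₁) * (1 - α₀ / (1 + α₀)) +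
          (α₀ + α₁) / (1 + α₀ + α₁) * (α₀ / (1 + α₀)) := by
          rw [hgen 0 (Or.inl rfl), hgen 1 (Or.inr rfl), q0, q1, ihn, h0v]
      _ = α₀ / (1 + α₀) := by
          have hA : (0:ℝ) < 1 + α₀ := by linarith [h.pos₀]
          have hB : (0:ℝ) < 1 + α₀ + α₁ := by linarith [h.pos₀, h.pos₁]
          field_simp
          ring

lemma P_AA (s : ℕ) (hs : 1 ≤ s) :
    (μ ({ω | X s ω = 1} ∩ {ω | X (s-1) ω = 1})).toReal =
      ((α₀ + α₁) / (1 + α₀ + α₁)) * (α₀ / (1 + α₀)) := by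
  have key := h.markov_gen s hs (Finset.range (s-1)) (by simp) (fun _ => (1:ℝ))
    (fun _ => Or.inr rfl)
  have hset : {ω | ∀ v, v < s → v ∉ Finset.range (s-1) → X v ω = (fun _ => (1:ℝ)) v}
      = {ω | X (s-1) ω = 1} := by
    ext ω
    simp only [Set.mem_setOf_eq, Finset.mem_range, not_lt]
    constructor
    · intro hω; exact hω (s-1) (by omega) (by omega)
    · intro hω v hv1 hv2
      have : v = s - 1 := by omega
      subst this; exact hω
  rw [hset] at key
  rw [key, h.P_one (s-1), qv, if_pos rfl]

end TwoStateChain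

namespace TwoStateChain
variable {Ω : Type} [MeasurableSpace Ω] {μ : Measure Ω} {α₀ α₁ : ℝ} {X : ℕ → Ω → ℝ}
variable (h : TwoStateChain Ω μ α₀ α₁ X)
include h

lemma step3 (s : ℕ) (hs : 1 ≤ s) (u : ℕ) (hu : s ≤ u) (c : ℝ) (hc : c = 0 ∨ c = 1) :
    (μ ({ω | X (u+1) ω = 1} ∩
        ({ω | X s ω = 1} ∩ {ω | X (s-1) ω = 1} ∩ {ω | X u ω = c}))).toReal
      = qv α₀ α₁ c *
        (μ ({ω | X s ω = 1} ∩ {ω | X (s-1) ω = 1} ∩ {ω | X u ω = c})).toReal := by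
  by_cases hcase : u = s ∧ c = 0
  · obtain ⟨rfl, rfl⟩ := hcase
    have hempty : {ω | X u ω = 1} ∩ {ω | X (u-1) ω = 1} ∩ {ω | X u ω = (0:ℝ)} = ∅ := by
      ext ω
      simp only [Set.mem_inter_iff, Set.mem_setOf_eq, Set.mem_empty_iff_false, iff_false,
        not_and]
      rintro ⟨h1, -⟩ h0
      norm_num [h0] at h1
    rw [hempty]
    simp
  · set b : ℕ → ℝ := fun v => if v = u then c else 1 with hbdef
    have hbs : b s = 1 := by
      by_cases e : s = u
      · rcases hc with rfl | rfl
        · exact absurd ⟨e.symm, rfl⟩ hcase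
        · simp [hbdef]
      · simp [hbdef, e]
    have hbs1 : b (s-1) = 1 := by
      have : s - 1 ≠ u := by omega
      simp [hbdef, this]
    have hbu : b u = c := by simp [hbdef]
    have hb : ∀ v, b v = 0 ∨ b v = 1 := by
      intro v
      by_cases e : v = u
      · simpa [hbdef, e] using hc
      · simp [hbdef, e]
    set G : Finset ℕ :=
      Finset.filter (fun v => ¬(v = s-1 ∨ v = s ∨ v = u)) (Finset.range (u+1)) with hGdef
    have hG : u ∉ G := by simp [hGdef]
    have key := h.markov_gen (u+1) (by omega) G (by simpa using hG) b hb
    have hset : {ω | ∀ v, v < u+1 → v ∉ G → X v ω = b v} =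
        {ω | X s ω = 1} ∩ {ω | X (s-1) ω = 1} ∩ {ω | X u ω = c} := by
      ext ω
      simp only [Set.mem_inter_iff, Set.mem_setOf_eq]
      constructor
      · intro hω
        have hnot : ∀ v, v < u+1 → (v = s-1 ∨ v = s ∨ v = u) → X v ω = b v := by
          intro v hv hv3
          refine hω v hv ?_
          simp only [hGdef, Finset.mem_filter, Finset.mem_range, not_and]
          intro _
          tauto
        refine ⟨⟨?_, ?_⟩, ?_⟩
        · have := hnot s (by omega) (Or.inr (Or.inl rfl)); rwa [hbs] at this
        · have := hnot (s-1) (by omega) (Or.inl rfl); rwa [hbs1] at this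
        · have := hnot u (by omega) (Or.inr (Or.inr rfl)); rwa [hbu] at this
      · rintro ⟨⟨h1, h2⟩, h3⟩ v hv hvG
        have hv3 : v = s-1 ∨ v = s ∨ v = u := by
          by_contra hcon
          exact hvG (by
            simp only [hGdef, Finset.mem_filter, Finset.mem_range]
            exact ⟨hv, hcon⟩)
        rcases hv3 with rfl | rfl | rfl
        · rw [hbs1]; exact h2
        · rw [hbs]; exact h1
        · rw [hbu]; exact h3
    rw [hset] at key
    have hq : b (u + 1 - 1) = c := by simpa using hbu
    rw [hq] at key
    exact key

lemma P_AAone (s : ℕ) (hs : 1 ≤ s) (k : ℕ) :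
    (μ ({ω | X s ω = 1} ∩ {ω | X (s-1) ω = 1} ∩ {ω | X (s+k) ω = 1})).toReal =
      ((α₀+α₁)/(1+α₀+α₁)) * (α₀/(1+α₀)) *
        (α₀/(1+α₀) + (1/(1+α₀)) * (α₁/(1+α₀+α₁))^k) := by
  have hA : (0:ℝ) < 1 + α₀ := by linarith [h.pos₀]
  have hB : (0:ℝ) < 1 + α₀ + α₁ := by linarith [h.pos₀, h.pos₁]
  induction k with
  | zero =>
    have hset : {ω | X s ω = 1} ∩ {ω | X (s-1) ω = 1} ∩ {ω | X (s+0) ω = 1} =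
        {ω | X s ω = 1} ∩ {ω | X (s-1) ω = 1} := by
      ext ω
      simp only [Nat.add_zero, Set.mem_inter_iff, Set.mem_setOf_eq]
      tauto
    rw [hset, h.P_AA s hs]
    have : α₀/(1+α₀) + (1/(1+α₀)) * (α₁/(1+α₀+α₁))^0 = 1 := by
      rw [pow_zero]; field_simp; ring
    rw [this, mul_one]
  | succ k ih =>
    set D := {ω | X s ω = 1} ∩ {ω | X (s-1) ω = 1} with hD
    have hDm : MeasurableSet D := (h.measSet s 1).inter (h.measSet (s-1) 1)
    have e1 := h.step3 s hs (s+k) (by omega) 1 (Or.inr rfl)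
    have e0 := h.step3 s hs (s+k) (by omega) 0 (Or.inl rfl)
    have q0 : qv α₀ α₁ 0 = α₀ / (1 + α₀ + α₁) := if_neg (by norm_num)
    have q1 : qv α₀ α₁ 1 = (α₀ + α₁) / (1 + α₀ + α₁) := if_pos rfl
    have hdisj : Disjoint (D ∩ {ω | X (s+k) ω = 0}) (D ∩ {ω | X (s+k) ω = 1}) := by
      rw [Set.disjoint_iff]
      rintro ω ⟨⟨-, h0⟩, ⟨-, h1⟩⟩
      simp only [Set.mem_setOf_eq] at h0 h1
      norm_num [h0] at h1
    have hDcover : D = (D ∩ {ω | X (s+k) ω = 0}) ∪ (D ∩ {ω | X (s+k) ω = 1}) := by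
      ext ω
      simp only [Set.mem_union, Set.mem_inter_iff, Set.mem_setOf_eq]
      constructor
      · intro hω
        rcases h.binary (s+k) ω with h0 | h0
        · exact Or.inl ⟨hω, h0⟩
        · exact Or.inr ⟨hω, h0⟩
      · rintro (⟨hω, -⟩ | ⟨hω, -⟩) <;> exact hω
    have hsplit : (μ D).toReal = (μ (D ∩ {ω | X (s+k) ω = 0})).toReal +
        (μ (D ∩ {ω | X (s+k) ω = 1})).toReal := by
      conv_lhs => rw [hDcover]
      exact h.P_union (hDm.inter (h.measSet (s+k) 1)) hdisj
    have hm : (μ D).toReal = ((α₀ + α₁) / (1 + α₀ + α₁)) * (α₀ / (1 + α₀)) := h.P_AA s hs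
    have hcover : D ∩ {ω | X (s+(k+1)) ω = 1} =
        ({ω | X (s+k+1) ω = 1} ∩ (D ∩ {ω | X (s+k) ω = 0})) ∪
        ({ω | X (s+k+1) ω = 1} ∩ (D ∩ {ω | X (s+k) ω = 1})) := by
      have : s + (k+1) = s + k + 1 := rfl
      rw [this]
      ext ω
      simp only [Set.mem_union, Set.mem_inter_iff, Set.mem_setOf_eq]
      constructor
      · rintro ⟨h1, h2⟩
        rcases h.binary (s+k) ω with h0 | h0
        · exact Or.inl ⟨h2, h1, h0⟩
        · exact Or.inr ⟨h2, h1, h0⟩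
      · rintro (⟨h2, h1, -⟩ | ⟨h2, h1, -⟩) <;> exact ⟨h1, h2⟩
    have hdisj2 : Disjoint ({ω | X (s+k+1) ω = 1} ∩ (D ∩ {ω | X (s+k) ω = 0}))
        ({ω | X (s+k+1) ω = 1} ∩ (D ∩ {ω | X (s+k) ω = 1})) :=
      hdisj.mono Set.inter_subset_right Set.inter_subset_right
    have hTm : MeasurableSet ({ω | X (s+k+1) ω = 1} ∩ (D ∩ {ω | X (s+k) ω = 1})) :=
      (h.measSet (s+k+1) 1).inter (hDm.inter (h.measSet (s+k) 1))
    have hgoalset : {ω | X s ω = 1} ∩ {ω | X (s-1) ω = 1} ∩ {ω | X (s+(k+1)) ω = 1} =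
        D ∩ {ω | X (s+(k+1)) ω = 1} := rfl
    rw [hgoalset, hcover, h.P_union hTm hdisj2, e0, e1, q0, q1]
    have hik : (μ (D ∩ {ω | X (s+k) ω = 1})).toReal =
        ((α₀+α₁)/(1+α₀+α₁)) * (α₀/(1+α₀)) *
          (α₀/(1+α₀) + (1/(1+α₀)) * (α₁/(1+α₀+α₁))^k) := ih
    have hi0 : (μ (D ∩ {ω | X (s+k) ω = 0})).toReal =
        (μ D).toReal - (μ (D ∩ {ω | X (s+k) ω = 1})).toReal := by linarith
    rw [hi0, hik, hm]
    rw [pow_succ]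
    generalize (α₁/(1+α₀+α₁))^k = L
    field_simp
    ring

end TwoStateChain

namespace TwoStateChain
variable {Ω : Type} [MeasurableSpace Ω] {μ : Measure Ω} {α₀ α₁ : ℝ} {X : ℕ → Ω → ℝ}
variable (h : TwoStateChain Ω μ α₀ α₁ X)
include h

lemma P_AAAA (s t : ℕ) (hs : 1 ≤ s) (hst : s < t) :
    (μ ({ω | X t ω = 1} ∩ {ω | X (t-1) ω = 1} ∩
        ({ω | X s ω = 1} ∩ {ω | X (s-1) ω = 1}))).toReal =
      ((α₀+α₁)/(1+α₀+α₁)) * (((α₀+α₁)/(1+α₀+α₁)) * (α₀/(1+α₀)) *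
        (α₀/(1+α₀) + (1/(1+α₀)) * (α₁/(1+α₀+α₁))^(t-1-s))) := by
  set G : Finset ℕ :=
    Finset.filter (fun v => ¬(v = s-1 ∨ v = s ∨ v = t-1)) (Finset.range t) with hGdef
  have hG : t - 1 ∉ G := by simp [hGdef]
  have key := h.markov_gen t (by omega) G hG (fun _ => (1:ℝ)) (fun _ => Or.inr rfl)
  have hset : {ω | ∀ v, v < t → v ∉ G → X v ω = (fun _ => (1:ℝ)) v} =
      {ω | X s ω = 1} ∩ {ω | X (s-1) ω = 1} ∩ {ω | X (t-1) ω = 1} := by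
    ext ω
    simp only [Set.mem_inter_iff, Set.mem_setOf_eq]
    constructor
    · intro hω
      have hnot : ∀ v, v < t → (v = s-1 ∨ v = s ∨ v = t-1) → X v ω = 1 := by
        intro v hv hv3
        refine hω v hv ?_
        simp only [hGdef, Finset.mem_filter, Finset.mem_range, not_and]
        intro _
        tauto
      exact ⟨⟨hnot s (by omega) (Or.inr (Or.inl rfl)),
        hnot (s-1) (by omega) (Or.inl rfl)⟩,
        hnot (t-1) (by omega) (Or.inr (Or.inr rfl))⟩
    · rintro ⟨⟨h1, h2⟩, h3⟩ v hv hvG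
      have hv3 : v = s-1 ∨ v = s ∨ v = t-1 := by
        by_contra hcon
        exact hvG (by
          simp only [hGdef, Finset.mem_filter, Finset.mem_range]
          exact ⟨hv, hcon⟩)
      rcases hv3 with rfl | rfl | rfl
      · exact h2
      · exact h1
      · exact h3
  rw [hset] at key
  have hgoalset : {ω | X t ω = 1} ∩ {ω | X (t-1) ω = 1} ∩
      ({ω | X s ω = 1} ∩ {ω | X (s-1) ω = 1}) =
      {ω | X t ω = 1} ∩
        ({ω | X s ω = 1} ∩ {ω | X (s-1) ω = 1} ∩ {ω | X (t-1) ω = 1}) := by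
    ext ω
    simp only [Set.mem_inter_iff, Set.mem_setOf_eq]
    tauto
  have hk : s + (t-1-s) = t - 1 := by omega
  have hone := h.P_AAone s hs (t-1-s)
  rw [hk] at hone
  rw [hgoalset, key, hone, qv, if_pos rfl]

lemma indicator_eq (t : ℕ) (ht : 1 ≤ t) :
    (fun ω => X t ω * X (t-1) ω) =
      Set.indicator ({ω | X t ω = 1} ∩ {ω | X (t-1) ω = 1}) 1 := by
  funext ω
  rcases h.binary t ω with h1 | h1 <;> rcases h.binary (t-1) ω with h2 | h2 <;>
    simp [Set.indicator_apply, Set.mem_inter_iff, h1, h2]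

lemma integral_one (t : ℕ) (ht : 1 ≤ t) :
    (∫ ω, X t ω * X (t-1) ω ∂μ) =
      (μ ({ω | X t ω = 1} ∩ {ω | X (t-1) ω = 1})).toReal := by
  rw [h.indicator_eq t ht, integral_indicator_one ((h.measSet t 1).inter (h.measSet (t-1) 1))]
  rfl

lemma integral_two (t s : ℕ) (ht : 1 ≤ t) (hs : 1 ≤ s) :
    (∫ ω, (X t ω * X (t-1) ω) * (X s ω * X (s-1) ω) ∂μ) =
      (μ ({ω | X t ω = 1} ∩ {ω | X (t-1) ω = 1} ∩
        ({ω | X s ω = 1} ∩ {ω | X (s-1) ω = 1}))).toReal := by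
  have hind : (fun ω => (X t ω * X (t-1) ω) * (X s ω * X (s-1) ω)) =
      Set.indicator ({ω | X t ω = 1} ∩ {ω | X (t-1) ω = 1} ∩
        ({ω | X s ω = 1} ∩ {ω | X (s-1) ω = 1})) 1 := by
    funext ω
    rcases h.binary t ω with h1 | h1 <;> rcases h.binary (t-1) ω with h2 | h2 <;>
      rcases h.binary s ω with h3 | h3 <;> rcases h.binary (s-1) ω with h4 | h4 <;>
      simp [Set.indicator_apply, Set.mem_inter_iff, h1, h2, h3, h4]
  calc (∫ ω, (X t ω * X (t-1) ω) * (X s ω * X (s-1) ω) ∂μ)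
      = ∫ ω, Set.indicator ({ω | X t ω = 1} ∩ {ω | X (t-1) ω = 1} ∩
          ({ω | X s ω = 1} ∩ {ω | X (s-1) ω = 1})) 1 ω ∂μ := by rw [hind]
    _ = _ := integral_indicator_one
        (((h.measSet t 1).inter (h.measSet (t-1) 1)).inter
          ((h.measSet s 1).inter (h.measSet (s-1) 1)))

end TwoStateChain

/-- Lemma (part i): mean, variance and autocovariance of `X_t X_{t−1}` for the
two-state stationary Markov chain. -/
theorem twoStateChain_prod_moments (Ω : Type) [MeasurableSpace Ω] (μ : Measure Ω)
    (α₀ α₁ : ℝ) (X : ℕ → Ω → ℝ) (hchain : TwoStateChain Ω μ α₀ α₁ X) :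
    (∀ t : ℕ, 1 ≤ t →
      ((∫ ω, X t ω * X (t - 1) ω ∂μ) =
        α₀ * (α₀ + α₁) / ((1 + α₀) * (1 + α₀ + α₁)) ∧
      covQ μ (fun ω => X t ω * X (t - 1) ω) (fun ω => X t ω * X (t - 1) ω) =
        α₀ * (α₀ + α₁) * (2 * α₀ + α₁ + 1) / ((1 + α₀) ^ 2 * (1 + α₀ + α₁) ^ 2))) ∧
    ∀ t s : ℕ, 1 ≤ t → 1 ≤ s → t ≠ s →
      covQ μ (fun ω => X t ω * X (t - 1) ω) (fun ω => X s ω * X (s - 1) ω) =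
        (α₁ / (1 + α₀ + α₁)) ^ (((t : ℤ) - (s : ℤ)).natAbs - 1) *
          (α₀ * (α₀ + α₁) ^ 2 / ((1 + α₀) ^ 2 * (1 + α₀ + α₁) ^ 2)) := by
  have h := hchain
  have hA : (0:ℝ) < 1 + α₀ := by linarith [h.pos₀]
  have hB : (0:ℝ) < 1 + α₀ + α₁ := by linarith [h.pos₀, h.pos₁]
  have hmean : ∀ t : ℕ, 1 ≤ t → (∫ ω, X t ω * X (t - 1) ω ∂μ) =
      α₀ * (α₀ + α₁) / ((1 + α₀) * (1 + α₀ + α₁)) := by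
    intro t ht
    rw [h.integral_one t ht, h.P_AA t ht]
    field_simp
  constructor
  · intro t ht
    refine ⟨hmean t ht, ?_⟩
    rw [covQ, h.integral_two t t ht ht, hmean t ht, Set.inter_self, h.P_AA t ht]
    field_simp
    ring
  · have main : ∀ t s : ℕ, 1 ≤ s → s < t →
        covQ μ (fun ω => X t ω * X (t - 1) ω) (fun ω => X s ω * X (s - 1) ω) =
          (α₁ / (1 + α₀ + α₁)) ^ (t - s - 1) *
            (α₀ * (α₀ + α₁) ^ 2 / ((1 + α₀) ^ 2 * (1 + α₀ + α₁) ^ 2)) := by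
      intro t s hs hst
      rw [covQ, h.integral_two t s (by omega) hs, hmean t (by omega), hmean s hs,
        h.P_AAAA s t hs hst]
      have he : t - 1 - s = t - s - 1 := by omega
      rw [he]
      set L := (α₁ / (1 + α₀ + α₁)) ^ (t - s - 1) with hL
      field_simp
      ring
    intro t s ht hs hne
    rcases lt_or_gt_of_ne hne with hlt | hgt
    · have hcomm : (fun ω => (X t ω * X (t - 1) ω) * (X s ω * X (s - 1) ω)) =
          (fun ω => (X s ω * X (s - 1) ω) * (X t ω * X (t - 1) ω)) := by
        funext ω; ring
      have hsym : covQ μ (fun ω => X t ω * X (t - 1) ω) (fun ω => X s ω * X (s - 1) ω) =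
          covQ μ (fun ω => X s ω * X (s - 1) ω) (fun ω => X t ω * X (t - 1) ω) := by
        rw [covQ, covQ, hcomm]
        ring
      rw [hsym, main s t ht hlt]
      congr 2
      omega
    · rw [main t s hs hgt]
      congr 2
      omega
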